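/- Let F be a continuous cumulative distribution function on [0,1] with F(c) > 0 for all c > 0 and lim_{c→0⁺} F(c) = 0. Fix n ≥ 2 and 1 ≤ x ≤ n−1. Let T_STR(c) and T_SAR(c) be functions satisfying T_STR(c) ≤ P[Bi(n, F(c)) > x] and T_SAR(c) ≥ σ(c)·P[Bi(n, F(c)) = x] for all c in some interval (0, t), where σ: (0,t) → (0,1] is weakly decreasing. Then there exists c̄ ∈ (0,t) such that T_STR(c) < T_SAR(c) for all c ∈ (0, c̄). -/
import Mathlib


open Filter Set

/-- P[Bi(n,p) = k] -/
noncomputable def binomPMF (n k : ℕ) (p : ℝ) : ℝ :=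
  (n.choose k : ℝ) * p ^ k * (1 - p) ^ (n - k)

/-- P[Bi(n,p) > k] -/
noncomputable def binomGT (n k : ℕ) (p : ℝ) : ℝ :=
  ∑ m ∈ Finset.Icc (k + 1) n, binomPMF n m p

lemma binomGT_le_crude (n x : ℕ) (p : ℝ) (hp0 : 0 ≤ p) (hp1 : p ≤ 1) :
    binomGT n x p ≤ 2 ^ n * p ^ (x + 1) := by
  unfold binomGT binomPMF
  calc ∑ m ∈ Finset.Icc (x + 1) n, (n.choose m : ℝ) * p ^ m * (1 - p) ^ (n - m)
      ≤ ∑ m ∈ Finset.Icc (x + 1) n, (n.choose m : ℝ) * p ^ (x + 1) := by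
        apply Finset.sum_le_sum
        intro m hm
        have hm1 := (Finset.mem_Icc.mp hm).1
        have h1 : p ^ m ≤ p ^ (x + 1) := pow_le_pow_of_le_one hp0 hp1 hm1
        have h2 : (1 - p) ^ (n - m) ≤ 1 := pow_le_one₀ (by linarith) (by linarith)
        have h3 : (0:ℝ) ≤ (n.choose m : ℝ) := Nat.cast_nonneg _
        simpa using mul_le_mul (mul_le_mul_of_nonneg_left h1 h3) h2
          (pow_nonneg (by linarith) _) (by positivity)
    _ = (∑ m ∈ Finset.Icc (x + 1) n, (n.choose m : ℝ)) * p ^ (x + 1) :=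
        (Finset.sum_mul ..).symm
    _ ≤ 2 ^ n * p ^ (x + 1) := by
        apply mul_le_mul_of_nonneg_right _ (pow_nonneg hp0 _)
        have hsub : Finset.Icc (x + 1) n ⊆ Finset.range (n + 1) := by
          intro m hm
          simp only [Finset.mem_range]
          exact Nat.lt_succ_of_le (Finset.mem_Icc.mp hm).2
        calc (∑ m ∈ Finset.Icc (x + 1) n, (n.choose m : ℝ))
            ≤ ∑ m ∈ Finset.range (n + 1), (n.choose m : ℝ) :=
              Finset.sum_le_sum_of_subset_of_nonneg hsub
                (fun _ _ _ => Nat.cast_nonneg _)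
          _ = 2 ^ n := by
              rw [← Nat.cast_sum, Nat.sum_range_choose]
              push_cast
              ring

theorem struck_below_sar_for_small_thresholds
    (F : ℝ → ℝ) (hFcont : Continuous F) (hFmono : Monotone F)
    (hF01 : ∀ c, 0 ≤ F c ∧ F c ≤ 1)
    (hFpos : ∀ c : ℝ, 0 < c → 0 < F c)
    (hFlim : Tendsto F (nhdsWithin 0 (Set.Ioi 0)) (nhds 0))
    (n x : ℕ) (hn : 2 ≤ n) (hx1 : 1 ≤ x) (hx2 : x ≤ n - 1)
    (t : ℝ) (ht : 0 < t)
    (σ : ℝ → ℝ)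
    (hσpos : ∀ c ∈ Set.Ioo (0 : ℝ) t, 0 < σ c ∧ σ c ≤ 1)
    (hσanti : AntitoneOn σ (Set.Ioo (0 : ℝ) t))
    (T_STR T_SAR : ℝ → ℝ)
    (hSTR : ∀ c ∈ Set.Ioo (0 : ℝ) t, T_STR c ≤ binomGT n x (F c))
    (hSAR : ∀ c ∈ Set.Ioo (0 : ℝ) t, σ c * binomPMF n x (F c) ≤ T_SAR c) :
    ∃ cbar ∈ Set.Ioo (0 : ℝ) t, ∀ c ∈ Set.Ioo (0 : ℝ) cbar, T_STR c < T_SAR c := by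
  have ht2 : t / 2 ∈ Set.Ioo (0 : ℝ) t := ⟨by linarith, by linarith⟩
  set s := σ (t / 2) with hs_def
  have hs : 0 < s := (hσpos _ ht2).1
  -- choose the smallness threshold for p = F c
  set ε : ℝ := min (s / 4 ^ n) (1 / 2) with hε_def
  have hε : 0 < ε := lt_min (div_pos hs (by positivity)) (by norm_num)
  have hev : ∀ᶠ c in nhdsWithin 0 (Set.Ioi 0), F c < ε :=
    hFlim.eventually_lt_const hε
  rw [eventually_nhdsWithin_iff] at hev
  rcases Metric.eventually_nhds_iff.mp hev with ⟨δ, hδ, hball⟩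
  refine ⟨min δ (t / 2), ⟨lt_min hδ ht2.1, lt_of_le_of_lt (min_le_right _ _) ht2.2⟩, ?_⟩
  intro c hc
  have hc0 : 0 < c := hc.1
  have hcδ : c < δ := lt_of_lt_of_le hc.2 (min_le_left _ _)
  have hct2 : c ≤ t / 2 := le_of_lt (lt_of_lt_of_le hc.2 (min_le_right _ _))
  have hct : c ∈ Set.Ioo (0 : ℝ) t := ⟨hc0, by linarith [ht2.2]⟩
  have hFcε : F c < ε := by
    apply hball (show dist c 0 < δ by simpa [Real.dist_eq, abs_of_pos hc0] using hcδ)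
    exact hc0
  set p := F c with hp_def
  have hp0 : 0 < p := hFpos c hc0
  have hp1 : p ≤ 1 := (hF01 c).2
  have hphalf : p ≤ 1 / 2 := le_of_lt (lt_of_lt_of_le hFcε (min_le_right _ _))
  have hps : p < s / 4 ^ n := lt_of_lt_of_le hFcε (min_le_left _ _)
  have hσc : s ≤ σ c := hσanti hct ht2 hct2
  -- key chain
  have key : binomGT n x p < σ c * binomPMF n x p := by
    have h1 : binomGT n x p ≤ 2 ^ n * p ^ (x + 1) :=
      binomGT_le_crude n x p hp0.le hp1
    have h2 : 2 ^ n * p ^ (x + 1) < s * (1 / 2) ^ n * p ^ x := by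
      have hpx : (0:ℝ) < p ^ x := pow_pos hp0 x
      have : (2:ℝ) ^ n * p < s * (1 / 2) ^ n := by
        have h4 : (4:ℝ) ^ n = 2 ^ n * 2 ^ n := by
          rw [← mul_pow]; norm_num
        have h2n : (0:ℝ) < 2 ^ n := by positivity
        rw [lt_div_iff₀ (by positivity : (0:ℝ) < 4 ^ n)] at hps
        rw [show s * (1 / 2 : ℝ) ^ n = s / 2 ^ n by
              rw [div_pow, one_pow, mul_one_div],
            lt_div_iff₀ h2n]
        calc (2:ℝ) ^ n * p * 2 ^ n = p * 4 ^ n := by rw [h4]; ring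
          _ < s := hps
      calc 2 ^ n * p ^ (x + 1) = (2 ^ n * p) * p ^ x := by ring
        _ < (s * (1 / 2) ^ n) * p ^ x := by
            exact mul_lt_mul_of_pos_right this hpx
        _ = s * (1 / 2) ^ n * p ^ x := rfl
    have h3 : s * (1 / 2) ^ n * p ^ x ≤ σ c * binomPMF n x p := by
      unfold binomPMF
      have hch : (1:ℝ) ≤ (n.choose x : ℝ) := by
        have : 0 < n.choose x := Nat.choose_pos (by omega)
        exact_mod_cast this
      have h1p : (1:ℝ) / 2 ≤ 1 - p := by linarith
      have hpow : ((1:ℝ) / 2) ^ n ≤ (1 - p) ^ (n - x) := by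
        calc ((1:ℝ) / 2) ^ n ≤ (1 / 2) ^ (n - x) := by
              apply pow_le_pow_of_le_one (by norm_num) (by norm_num) (Nat.sub_le n x)
          _ ≤ (1 - p) ^ (n - x) := by
              apply pow_le_pow_left₀ (by norm_num) h1p _
      have hpx : (0:ℝ) ≤ p ^ x := (pow_pos hp0 x).le
      have hσ0 : 0 < σ c := (hσpos c hct).1
      calc s * (1 / 2) ^ n * p ^ x ≤ σ c * ((1:ℝ) * p ^ x * (1 - p) ^ (n - x)) := by
            have : s * ((1/2)^n * p^x) ≤ σ c * (p ^ x * (1 - p) ^ (n - x)) := by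
              apply mul_le_mul hσc _ (by positivity) hσ0.le
              rw [mul_comm]
              exact mul_le_mul_of_nonneg_left hpow hpx
            linarith [this]
        _ ≤ σ c * ((n.choose x : ℝ) * p ^ x * (1 - p) ^ (n - x)) := by
            apply mul_le_mul_of_nonneg_left _ hσ0.le
            apply mul_le_mul_of_nonneg_right _ (by positivity)
            exact mul_le_mul_of_nonneg_right hch hpx
    linarith
  calc T_STR c ≤ binomGT n x p := hSTR c hct
    _ < σ c * binomPMF n x p := key
    _ ≤ T_SAR c := hSAR c hct
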